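/- Let K_t ⊂ ℝ be a bounded interval of length h_t > 0, let K_x ⊂ ℝ^d be a bounded measurable set with 0 < |K_x| < ∞, set K = K_t × K_x, and let v ∈ L²(K). Define m(t) := ⟨v(t,·)⟩_{K_x} for t ∈ K_t. Then: (i) the Pythagorean identity ‖v − ⟨v⟩_K‖²_{L²(K)} = ∫_{K_t} ‖v(t,·) − m(t)‖²_{L²(K_x)} dt + |K_x| ∫_{K_t} |m(t) − ⟨v⟩_K|² dt holds; (ii) |K_x| ∫_{K_t} |m(t) − ⟨v⟩_K|² dt ≤ h_t ∫_{K_t} ∫_{K_t} ‖v(t,·) − v(s,·)‖²_{L²(K_x)} |t−s|^{-2} ds dt. -/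

import Mathlib

open MeasureTheory Set

/-- The measure on the time-space cylinder `K = K_t × K_x`. -/
noncomputable def cylMeasure {d : ℕ} (Kt : Set ℝ) (Kx : Set (Fin d → ℝ)) :
    Measure (ℝ × (Fin d → ℝ)) :=
  (volume.restrict Kt).prod (volume.restrict Kx)

/-- The spatial mean `m(t) = ⟨v(t,·)⟩_{K_x}` of `v(t,·)` over `K_x`. -/
noncomputable def spatialMean {d : ℕ} (Kx : Set (Fin d → ℝ))
    (v : ℝ → (Fin d → ℝ) → ℝ) (t : ℝ) : ℝ :=
  (volume Kx).toReal⁻¹ * ∫ x in Kx, v t x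

/-- The mean `⟨v⟩_K` of `v` over the cylinder `K = K_t × K_x`. -/
noncomputable def cylMean {d : ℕ} (Kt : Set ℝ) (Kx : Set (Fin d → ℝ))
    (v : ℝ → (Fin d → ℝ) → ℝ) : ℝ :=
  ((cylMeasure Kt Kx) univ).toReal⁻¹ * ∫ p, v p.1 p.2 ∂(cylMeasure Kt Kx)

lemma sq_int_le {α : Type*} {mα : MeasurableSpace α} {ν : Measure α}
    [IsFiniteMeasure ν] {f : α → ℝ} (hf : Integrable f ν)
    (hf2 : Integrable (fun x => f x ^ 2) ν) :
    (∫ x, f x ∂ν) ^ 2 ≤ (ν univ).toReal * ∫ x, f x ^ 2 ∂ν := by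
  set A := (ν univ).toReal with hA
  have hA0 : 0 ≤ A := ENNReal.toReal_nonneg
  rcases eq_or_lt_of_le hA0 with h0 | hApos
  · have hν : ν univ = 0 := by
      have hne := measure_ne_top ν univ
      rcases (ENNReal.toReal_eq_zero_iff _).mp h0.symm with h | h
      · exact h
      · exact absurd h hne
    have : ν = 0 := Measure.measure_univ_eq_zero.mp hν
    simp [this]
  · set I := ∫ x, f x ∂ν with hI
    set c := A⁻¹ * I with hc
    have hAne : A ≠ 0 := ne_of_gt hApos
    have hm : Integrable (fun x => 2 * (f x * c)) ν := (hf.mul_const c).const_mul 2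
    have h0' : (0:ℝ) ≤ ∫ x, (f x - c) ^ 2 ∂ν := integral_nonneg fun x => sq_nonneg _
    have heq : ∫ x, (f x - c) ^ 2 ∂ν
        = (∫ x, f x ^ 2 ∂ν) - 2 * (I * c) + A * c ^ 2 := by
      have hexp : (fun x => (f x - c) ^ 2)
          = fun x => (f x ^ 2 - 2 * (f x * c)) + c ^ 2 := by
        funext x; ring
      have hsub : Integrable (fun x => f x ^ 2 - 2 * (f x * c)) ν := hf2.sub hm
      rw [hexp, integral_add hsub (integrable_const _),
        integral_sub hf2 hm, integral_const_mul, integral_mul_const, integral_const,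
        smul_eq_mul, measureReal_def, ← hA, ← hI]
    have key : 0 ≤ (∫ x, f x ^ 2 ∂ν) - 2 * (I * c) + A * c ^ 2 := heq ▸ h0'
    have e1 : A * c ^ 2 = A⁻¹ * I ^ 2 := by rw [hc]; field_simp
    have e2 : 2 * (I * c) = 2 * (A⁻¹ * I ^ 2) := by rw [hc]; ring
    rw [e1, e2] at key
    have key2 : A⁻¹ * I ^ 2 ≤ ∫ x, f x ^ 2 ∂ν := by linarith
    calc I ^ 2 = A * (A⁻¹ * I ^ 2) := by field_simp
    _ ≤ A * ∫ x, f x ^ 2 ∂ν := mul_le_mul_of_nonneg_left key2 hA0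


/-- The two steps in the proof of the parabolic Poincaré inequality
(Lemma 4.3): (i) the Pythagorean identity (4.5)
`‖v − ⟨v⟩_K‖²_{L²(K)} = ∫_{K_t} ‖v(t,·) − m(t)‖²_{L²(K_x)} dt
  + |K_x| ∫_{K_t} |m(t) − ⟨v⟩_K|² dt` with `m(t) = ⟨v(t,·)⟩_{K_x}`, and
(ii) the Jensen-type estimate
`|K_x| ∫_{K_t} |m(t) − ⟨v⟩_K|² dt
  ≤ h_t ∫_{K_t}∫_{K_t} ‖v(t,·) − v(s,·)‖²_{L²(K_x)} |t−s|⁻² ds dt`. -/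
theorem stmt_3 {d : ℕ} (a b ht : ℝ) (hab : a < b) (hht : b - a = ht)
    (Kx : Set (Fin d → ℝ)) (hKxm : MeasurableSet Kx)
    (hKx0 : 0 < volume Kx) (hKxfin : volume Kx < ⊤)
    (v : ℝ → (Fin d → ℝ) → ℝ)
    (hv : MemLp (fun p : ℝ × (Fin d → ℝ) => v p.1 p.2) 2 (cylMeasure (Ioo a b) Kx)) :
    ((∫ p, (v p.1 p.2 - cylMean (Ioo a b) Kx v) ^ 2 ∂(cylMeasure (Ioo a b) Kx))
        = (∫ t in Ioo a b, ∫ x in Kx, (v t x - spatialMean Kx v t) ^ 2)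
          + (volume Kx).toReal *
              ∫ t in Ioo a b, (spatialMean Kx v t - cylMean (Ioo a b) Kx v) ^ 2) ∧
    ENNReal.ofReal ((volume Kx).toReal *
        ∫ t in Ioo a b, (spatialMean Kx v t - cylMean (Ioo a b) Kx v) ^ 2)
      ≤ ENNReal.ofReal ht *
          ∫⁻ t in Ioo a b, ∫⁻ s in Ioo a b, ∫⁻ x in Kx,
            ENNReal.ofReal ((v t x - v s x) ^ 2 / |t - s| ^ 2) := by
  set μt := volume.restrict (Ioo a b) with hμt
  set μx := volume.restrict Kx with hμx
  set κ := (volume Kx).toReal with hκdef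
  set m := spatialMean Kx v with hmdef
  set c := cylMean (Ioo a b) Kx v with hcdef
  have hcyl : cylMeasure (Ioo a b) Kx = μt.prod μx := rfl
  rw [hcyl] at hv ⊢
  have hht0 : 0 < ht := hht ▸ sub_pos.mpr hab
  have hκ : 0 < κ := ENNReal.toReal_pos hKx0.ne' hKxfin.ne
  have hκne : κ ≠ 0 := ne_of_gt hκ
  have hhtne : ht ≠ 0 := ne_of_gt hht0
  haveI hfin_t : IsFiniteMeasure μt := ⟨by
    rw [hμt, Measure.restrict_apply_univ, Real.volume_Ioo]; exact ENNReal.ofReal_lt_top⟩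
  haveI hfin_x : IsFiniteMeasure μx := ⟨by
    rw [hμx, Measure.restrict_apply_univ]; exact hKxfin⟩
  have hμt_univ : (μt univ).toReal = ht := by
    rw [hμt, Measure.restrict_apply_univ, Real.volume_Ioo,
      ENNReal.toReal_ofReal (by linarith), hht]
  have hμx_univ : (μx univ).toReal = κ := by rw [hμx, Measure.restrict_apply_univ, hκdef]
  have hM : ((μt.prod μx) univ).toReal = ht * κ := by
    rw [← univ_prod_univ, Measure.prod_prod, ENNReal.toReal_mul, hμt_univ, hμx_univ]
  -- basic integrability
  have hvae : AEStronglyMeasurable (fun p : ℝ × (Fin d → ℝ) => v p.1 p.2) (μt.prod μx) := hv.1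
  have hint : Integrable (fun p : ℝ × (Fin d → ℝ) => v p.1 p.2) (μt.prod μx) :=
    hv.integrable one_le_two
  have hsq : Integrable (fun p : ℝ × (Fin d → ℝ) => v p.1 p.2 ^ 2) (μt.prod μx) :=
    hv.integrable_sq
  have hsec : ∀ᵐ t ∂μt, Integrable (fun x => v t x) μx ∧ Integrable (fun x => v t x ^ 2) μx :=
    hint.prod_right_ae.and hsq.prod_right_ae
  have hm_eq : ∀ t, m t = κ⁻¹ * ∫ x, v t x ∂μx := fun t => rfl
  have hmm : AEStronglyMeasurable m μt := by
    have h1 : AEStronglyMeasurable (fun t => ∫ x, v t x ∂μx) μt := hvae.integral_prod_right'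
    have : m = fun t => κ⁻¹ * ∫ x, v t x ∂μx := funext hm_eq
    rw [this]; exact h1.const_mul _
  have hF : Integrable (fun t => ∫ x, v t x ^ 2 ∂μx) μt := hsq.integral_prod_left
  have hmsq_le : ∀ᵐ t ∂μt, (m t) ^ 2 ≤ κ⁻¹ * ∫ x, v t x ^ 2 ∂μx := by
    filter_upwards [hsec] with t ht'
    obtain ⟨h1, h2⟩ := ht'
    have hj := sq_int_le h1 h2
    rw [hμx_univ] at hj
    rw [hm_eq t, mul_pow]
    calc κ⁻¹ ^ 2 * (∫ x, v t x ∂μx) ^ 2 ≤ κ⁻¹ ^ 2 * (κ * ∫ x, v t x ^ 2 ∂μx) :=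
      mul_le_mul_of_nonneg_left hj (by positivity)
    _ = κ⁻¹ * ∫ x, v t x ^ 2 ∂μx := by field_simp
  have hFnn : ∀ᵐ t ∂μt, 0 ≤ ∫ x, v t x ^ 2 ∂μx := by
    filter_upwards with t; exact integral_nonneg fun x => sq_nonneg _
  have hm2 : Integrable (fun t => m t ^ 2) μt := by
    refine Integrable.mono' (hF.const_mul κ⁻¹) ?_ ?_
    · have : (fun t => m t ^ 2) = fun t => m t * m t := by funext t; ring
      rw [this]; exact hmm.mul hmm
    · filter_upwards [hmsq_le] with t h
      rw [Real.norm_eq_abs, abs_of_nonneg (sq_nonneg _)]; exact h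
  have hm1 : Integrable m μt := by
    refine Integrable.mono' ((integrable_const 1).add hm2) hmm ?_
    filter_upwards with t
    rw [Real.norm_eq_abs]
    show |m t| ≤ 1 + m t ^ 2
    nlinarith [abs_nonneg (m t), sq_abs (m t), sq_nonneg (|m t| - 1)]
  -- the mean over the cylinder
  have hIv : ∫ p, v p.1 p.2 ∂(μt.prod μx) = ∫ t, ∫ x, v t x ∂μx ∂μt := integral_prod _ hint
  have hc : ∫ t, m t ∂μt = ht * c := by
    have h2 : ∫ t, ∫ x, v t x ∂μx ∂μt = κ * ∫ t, m t ∂μt := by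
      have : (fun t => ∫ x, v t x ∂μx) = fun t => κ * m t := by
        funext t; rw [hm_eq t]; field_simp
      rw [this, integral_const_mul]
    rw [hcdef, cylMean, hcyl, hM, hIv, h2]
    field_simp
  -- set the RHS triple lintegral
  set Q : ℝ → ENNReal := fun t => ∫⁻ s, ∫⁻ x,
      ENNReal.ofReal ((v t x - v s x) ^ 2 / |t - s| ^ 2) ∂μx ∂μt with hQdef
  -- Part (i)
  have hvc : MemLp (fun p : ℝ × (Fin d → ℝ) => v p.1 p.2 - c) 2 (μt.prod μx) :=
    hv.sub (memLp_const c)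
  have hdiff2 : Integrable (fun p : ℝ × (Fin d → ℝ) => (v p.1 p.2 - c) ^ 2) (μt.prod μx) :=
    hvc.integrable_sq
  have hLHS : ∫ p, (v p.1 p.2 - c) ^ 2 ∂(μt.prod μx)
      = ∫ t, ∫ x, (v t x - c) ^ 2 ∂μx ∂μt := integral_prod _ hdiff2
  have hptw : ∀ᵐ t ∂μt, ∫ x, (v t x - c) ^ 2 ∂μx
      = (∫ x, (v t x - m t) ^ 2 ∂μx) + κ * (m t - c) ^ 2 := by
    filter_upwards [hsec] with t ht'
    obtain ⟨h1, h2⟩ := ht'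
    have hGt : ∫ x, v t x ∂μx = κ * m t := by rw [hm_eq t]; field_simp
    have hi1 : Integrable (fun x => (v t x - m t) ^ 2) μx := by
      have he : (fun x => (v t x - m t) ^ 2)
          = fun x => (v t x ^ 2 - 2 * m t * v t x) + m t ^ 2 := by funext x; ring
      rw [he]
      exact (h2.sub (h1.const_mul _)).add (integrable_const _)
    have hi2 : Integrable (fun x => 2 * (m t - c) * (v t x - m t)) μx :=
      (h1.sub (integrable_const _)).const_mul _
    have hexp : (fun x => (v t x - c) ^ 2)
        = fun x => ((v t x - m t) ^ 2 + 2 * (m t - c) * (v t x - m t)) + (m t - c) ^ 2 := by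
      funext x; ring
    have hadd : Integrable
        (fun x => (v t x - m t) ^ 2 + 2 * (m t - c) * (v t x - m t)) μx := hi1.add hi2
    rw [hexp, integral_add hadd (integrable_const _), integral_add hi1 hi2,
      integral_const_mul, integral_sub h1 (integrable_const _), integral_const, integral_const,
      smul_eq_mul, smul_eq_mul, measureReal_def, hμx_univ, hGt]
    ring
  have hmc2 : Integrable (fun t => (m t - c) ^ 2) μt := by
    have he : (fun t => (m t - c) ^ 2) = fun t => (m t ^ 2 - 2 * c * m t) + c ^ 2 := by
      funext t; ring
    rw [he]; exact (hm2.sub (hm1.const_mul _)).add (integrable_const _)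
  have hg2 : Integrable (fun t => κ * (m t - c) ^ 2) μt := hmc2.const_mul κ
  have hf1 : Integrable (fun t => ∫ x, (v t x - c) ^ 2 ∂μx) μt := hdiff2.integral_prod_left
  have hfirst : Integrable (fun t => ∫ x, (v t x - m t) ^ 2 ∂μx) μt := by
    refine (hf1.sub hg2).congr ?_
    filter_upwards [hptw] with t h
    simp only [Pi.sub_apply]
    linarith
  have part1 : (∫ p, (v p.1 p.2 - c) ^ 2 ∂(μt.prod μx))
      = (∫ t, ∫ x, (v t x - m t) ^ 2 ∂μx ∂μt) + κ * ∫ t, (m t - c) ^ 2 ∂μt := by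
    rw [hLHS, integral_congr_ae hptw, integral_add hfirst hg2, integral_const_mul]
  -- Part (ii)
  have havg : ∀ t : ℝ, ∫ s, (m t - m s) ∂μt = ht * (m t - c) := by
    intro t
    rw [integral_sub (integrable_const _) hm1, integral_const, smul_eq_mul, measureReal_def, hμt_univ, hc]
    ring
  have hint2 : ∀ t : ℝ, Integrable (fun s => (m t - m s) ^ 2) μt := by
    intro t
    have he : (fun s => (m t - m s) ^ 2) = fun s => (m t ^ 2 - 2 * m t * m s) + m s ^ 2 := by
      funext s; ring
    rw [he]
    exact ((integrable_const _).sub (hm1.const_mul _)).add hm2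
  have hstep2 : ∀ t : ℝ, (m t - c) ^ 2 ≤ ht⁻¹ * ∫ s, (m t - m s) ^ 2 ∂μt := by
    intro t
    have hint1 : Integrable (fun s => m t - m s) μt := (integrable_const _).sub hm1
    have hj := sq_int_le hint1 (hint2 t)
    rw [havg t, hμt_univ] at hj
    have h2' : (m t - c) ^ 2 * ht ^ 2 ≤ ht * ∫ s, (m t - m s) ^ 2 ∂μt := by
      calc (m t - c) ^ 2 * ht ^ 2 = (ht * (m t - c)) ^ 2 := by ring
      _ ≤ _ := hj
    calc (m t - c) ^ 2 = ((m t - c) ^ 2 * ht ^ 2) / ht ^ 2 := by field_simp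
    _ ≤ (ht * ∫ s, (m t - m s) ^ 2 ∂μt) / ht ^ 2 := by gcongr
    _ = ht⁻¹ * ∫ s, (m t - m s) ^ 2 ∂μt := by field_simp
  have hdiag : ∀ t0 : ℝ, (∀ᵐ s ∂μt, s ≠ t0) := by
    intro t0
    rw [ae_iff]
    have hsub : {s : ℝ | ¬s ≠ t0} ⊆ {t0} := by intro s hs; simp at hs; simp [hs]
    refine measure_mono_null hsub ?_
    rw [hμt, Measure.restrict_apply (measurableSet_singleton _)]
    exact measure_mono_null inter_subset_left Real.volume_singleton
  have hsecm : ∀ᵐ t ∂μt, AEStronglyMeasurable (fun x => v t x) μx := hvae.prodMk_left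
  have hts : ∀ᵐ t ∂μt, ∫⁻ s, ENNReal.ofReal ((m t - m s) ^ 2) ∂μt
      ≤ ENNReal.ofReal (κ⁻¹ * ht ^ 2) * Q t := by
    filter_upwards [hsec, hsecm, ae_restrict_mem measurableSet_Ioo] with t ht' htm htIoo
    obtain ⟨ht1, ht2⟩ := ht'
    rw [hQdef, ← lintegral_const_mul' _ _ ENNReal.ofReal_ne_top]
    refine lintegral_mono_ae ?_
    filter_upwards [hsec, hsecm, ae_restrict_mem measurableSet_Ioo, hdiag t]
      with s hs' hsm hsIoo hsne
    obtain ⟨hs1, hs2⟩ := hs'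
    have habs : |t - s| ≤ ht := by
      rw [abs_sub_le_iff]
      constructor <;> [skip; skip] <;>
        · obtain ⟨h1, h2⟩ := htIoo; obtain ⟨h3, h4⟩ := hsIoo; linarith
    have habs0 : 0 < |t - s| := abs_pos.mpr (sub_ne_zero.mpr (Ne.symm hsne))
    have hD : Integrable (fun x => v t x - v s x) μx := ht1.sub hs1
    have hDsm : AEStronglyMeasurable (fun x => (v t x - v s x) ^ 2) μx := by
      have he : (fun x => (v t x - v s x) ^ 2)
          = fun x => (v t x - v s x) * (v t x - v s x) := by funext x; ring
      rw [he]; exact (htm.sub hsm).mul (htm.sub hsm)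
    have hD2 : Integrable (fun x => (v t x - v s x) ^ 2) μx := by
      refine Integrable.mono' ((ht2.const_mul 2).add (hs2.const_mul 2)) hDsm ?_
      filter_upwards with x
      rw [Real.norm_eq_abs, abs_of_nonneg (sq_nonneg _)]
      show (v t x - v s x) ^ 2 ≤ 2 * v t x ^ 2 + 2 * v s x ^ 2
      nlinarith [sq_nonneg (v t x + v s x)]
    have hj := sq_int_le hD hD2
    rw [hμx_univ] at hj
    have hms : m t - m s = κ⁻¹ * ∫ x, (v t x - v s x) ∂μx := by
      rw [hm_eq t, hm_eq s, integral_sub ht1 hs1]; ring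
    have hmsq : (m t - m s) ^ 2 ≤ κ⁻¹ * ∫ x, (v t x - v s x) ^ 2 ∂μx := by
      rw [hms, mul_pow]
      calc κ⁻¹ ^ 2 * (∫ x, (v t x - v s x) ∂μx) ^ 2
          ≤ κ⁻¹ ^ 2 * (κ * ∫ x, (v t x - v s x) ^ 2 ∂μx) :=
        mul_le_mul_of_nonneg_left hj (by positivity)
      _ = κ⁻¹ * ∫ x, (v t x - v s x) ^ 2 ∂μx := by field_simp
    calc ENNReal.ofReal ((m t - m s) ^ 2)
        ≤ ENNReal.ofReal (κ⁻¹ * ∫ x, (v t x - v s x) ^ 2 ∂μx) :=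
        ENNReal.ofReal_le_ofReal hmsq
    _ = ENNReal.ofReal κ⁻¹ * ∫⁻ x, ENNReal.ofReal ((v t x - v s x) ^ 2) ∂μx := by
        rw [ENNReal.ofReal_mul (by positivity),
          ofReal_integral_eq_lintegral_ofReal hD2
            (Filter.Eventually.of_forall fun x => sq_nonneg _)]
    _ ≤ ENNReal.ofReal κ⁻¹ * (ENNReal.ofReal (ht ^ 2) *
          ∫⁻ x, ENNReal.ofReal ((v t x - v s x) ^ 2 / |t - s| ^ 2) ∂μx) := by
        refine mul_le_mul_right ?_ _
        rw [← lintegral_const_mul' _ _ ENNReal.ofReal_ne_top]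
        refine lintegral_mono fun x => ?_
        rw [← ENNReal.ofReal_mul (by positivity)]
        refine ENNReal.ofReal_le_ofReal ?_
        have h1 : (v t x - v s x) ^ 2 / ht ^ 2 ≤ (v t x - v s x) ^ 2 / |t - s| ^ 2 := by
          apply div_le_div_of_nonneg_left (sq_nonneg _) (by positivity)
          nlinarith [habs, habs0]
        calc (v t x - v s x) ^ 2 = ht ^ 2 * ((v t x - v s x) ^ 2 / ht ^ 2) := by field_simp
        _ ≤ ht ^ 2 * ((v t x - v s x) ^ 2 / |t - s| ^ 2) :=
          mul_le_mul_of_nonneg_left h1 (by positivity)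
    _ = ENNReal.ofReal (κ⁻¹ * ht ^ 2) *
          ∫⁻ x, ENNReal.ofReal ((v t x - v s x) ^ 2 / |t - s| ^ 2) ∂μx := by
        rw [ENNReal.ofReal_mul (by positivity), mul_assoc]
  have part2 : ENNReal.ofReal (κ * ∫ t, (m t - c) ^ 2 ∂μt)
      ≤ ENNReal.ofReal ht * ∫⁻ t, Q t ∂μt := by
    calc ENNReal.ofReal (κ * ∫ t, (m t - c) ^ 2 ∂μt)
        = ENNReal.ofReal κ * ∫⁻ t, ENNReal.ofReal ((m t - c) ^ 2) ∂μt := by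
          rw [ENNReal.ofReal_mul (le_of_lt hκ),
            ofReal_integral_eq_lintegral_ofReal hmc2
              (Filter.Eventually.of_forall fun t => sq_nonneg _)]
    _ ≤ ENNReal.ofReal κ * ∫⁻ t,
          (ENNReal.ofReal ht⁻¹ * (ENNReal.ofReal (κ⁻¹ * ht ^ 2) * Q t)) ∂μt := by
        refine mul_le_mul_right (lintegral_mono_ae ?_) _
        filter_upwards [hts] with t hts'
        calc ENNReal.ofReal ((m t - c) ^ 2)
            ≤ ENNReal.ofReal (ht⁻¹ * ∫ s, (m t - m s) ^ 2 ∂μt) :=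
            ENNReal.ofReal_le_ofReal (hstep2 t)
        _ = ENNReal.ofReal ht⁻¹ * ENNReal.ofReal (∫ s, (m t - m s) ^ 2 ∂μt) :=
            ENNReal.ofReal_mul (by positivity)
        _ = ENNReal.ofReal ht⁻¹ * ∫⁻ s, ENNReal.ofReal ((m t - m s) ^ 2) ∂μt := by
            rw [ofReal_integral_eq_lintegral_ofReal (hint2 t)
              (Filter.Eventually.of_forall fun s => sq_nonneg _)]
        _ ≤ ENNReal.ofReal ht⁻¹ * (ENNReal.ofReal (κ⁻¹ * ht ^ 2) * Q t) :=
            mul_le_mul_right hts' _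
    _ = (ENNReal.ofReal κ * (ENNReal.ofReal ht⁻¹ * ENNReal.ofReal (κ⁻¹ * ht ^ 2))) *
          ∫⁻ t, Q t ∂μt := by
        simp_rw [← mul_assoc]
        rw [lintegral_const_mul' _ _
          (ENNReal.mul_ne_top ENNReal.ofReal_ne_top ENNReal.ofReal_ne_top), ← mul_assoc]
        ring
    _ = ENNReal.ofReal ht * ∫⁻ t, Q t ∂μt := by
        rw [← ENNReal.ofReal_mul (by positivity), ← ENNReal.ofReal_mul (le_of_lt hκ)]
        congr 2
        field_simp
  exact ⟨part1, part2⟩
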